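/- If m = 2n is even, then θ^n is self-dual under the composite Hodge operator: ⋆̄(θ^n) = θ^n; moreover ∗_g(θ^n) = (−1)^s (−1)^{n²} ★_h(θ^n). -/

import Mathlib

open TensorProduct ExteriorAlgebra

set_option maxHeartbeats 1000000
set_option synthInstance.maxHeartbeats 400000

noncomputable section

/-- Wedge product of a finite family of vectors, as an element of the exterior algebra. -/
def wedgeL {M : Type} [AddCommGroup M] [Module ℝ M] {n : ℕ} (v : Fin n → M) :
    ExteriorAlgebra ℝ M :=
  (List.ofFn fun i => ι ℝ (v i)).prod

/-- The bigraded algebra `Λ V* ⊗ Λ ℝ^m` of vector-valued forms, with `U` playing the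
role of `V*` and `Fin m → ℝ` the role of `W = ℝ^m`. -/
abbrev Omega (U : Type) [AddCommGroup U] [Module ℝ U] (m : ℕ) : Type :=
  ExteriorAlgebra ℝ U ⊗[ℝ] ExteriorAlgebra ℝ (Fin m → ℝ)

/-- The subspace of bidegree `(k, h)` elements: `Λ^k U ⊗ Λ^h ℝ^m`. -/
def bideg (U : Type) [AddCommGroup U] [Module ℝ U] (m k h : ℕ) :
    Submodule ℝ (Omega U m) :=
  Submodule.map₂ (TensorProduct.mk ℝ _ _) (⋀[ℝ]^k U) (⋀[ℝ]^h (Fin m → ℝ))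

/-- The solder element `θ = Σ_a θ^a ⊗ T_a`, where `T_a` is the standard basis of `ℝ^m`. -/
def solder {U : Type} [AddCommGroup U] [Module ℝ U] {m : ℕ} (u : Fin m → U) : Omega U m :=
  ∑ a, ι ℝ (u a) ⊗ₜ[ℝ] ι ℝ (Pi.single a 1)

/-- The composite volume element `ν = ν_g ⊗ n_h` (wedge of the dual orthonormal basis
tensor the wedge of the standard basis). -/
def vol {U : Type} [AddCommGroup U] [Module ℝ U] {m : ℕ} (u : Fin m → U) : Omega U m :=
  wedgeL u ⊗ₜ[ℝ] wedgeL (fun a : Fin m => Pi.single a (1 : ℝ))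


variable {M : Type} [AddCommGroup M] [Module ℝ M]

lemma wedgeL_eq_ιMulti {k : ℕ} (v : Fin k → M) : wedgeL v = ιMulti ℝ k v :=
  (ιMulti_apply v).symm

lemma wedgeL_mul {k l : ℕ} (v : Fin k → M) (w : Fin l → M) :
    wedgeL v * wedgeL w = wedgeL (Fin.append v w) := by
  unfold wedgeL
  rw [← List.prod_append, ← List.ofFn_fin_append]
  refine congrArg List.prod (congrArg List.ofFn (funext fun i => ?_))
  refine Fin.addCases (fun j => ?_) (fun j => ?_) i <;> simp [Fin.append_left, Fin.append_right]

lemma wedgeL_cast {k l : ℕ} (h : k = l) (v : Fin l → M) :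
    wedgeL (fun i : Fin k => v (finCongr h i)) = wedgeL v := by
  subst h; simp [finCongr]

lemma wedgeL_mem {k : ℕ} (v : Fin k → M) : wedgeL v ∈ ⋀[ℝ]^k M := by
  rw [wedgeL_eq_ιMulti]
  exact ExteriorAlgebra.ιMulti_range ℝ k ⟨v, rfl⟩

lemma wedgeL_zero_eq_one (v : Fin 0 → M) : wedgeL v = 1 := by
  simp [wedgeL]

lemma ι_mul_wedgeL {k : ℕ} (x : M) (v : Fin k → M) :
    ι ℝ x * wedgeL v = wedgeL (Fin.cons x v) := by
  unfold wedgeL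
  rw [List.ofFn_succ]
  simp [List.prod_cons]

lemma ι_mul_ι_anticomm (x y : M) : ι ℝ x * ι ℝ y = - (ι ℝ y * ι ℝ x) := by
  have h := ExteriorAlgebra.ι_sq_zero (R := ℝ) (x + y)
  rw [map_add, add_mul, mul_add, mul_add, ExteriorAlgebra.ι_sq_zero,
    ExteriorAlgebra.ι_sq_zero] at h
  linear_combination (norm := noncomm_ring) h

lemma ι_mul_wedgeL_comm {k : ℕ} (x : M) (v : Fin k → M) :
    ι ℝ x * wedgeL v = ((-1 : ℝ) ^ k) • (wedgeL v * ι ℝ x) := by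
  induction k with
  | zero => simp [wedgeL_zero_eq_one]
  | succ k ih =>
    have hv : wedgeL v = ι ℝ (v 0) * wedgeL (fun i : Fin k => v i.succ) := by
      rw [ι_mul_wedgeL]
      congr 1
      exact (Fin.cons_self_tail v).symm
    rw [hv, ← mul_assoc, ι_mul_ι_anticomm x (v 0), neg_mul, mul_assoc,
      ih (fun i => v i.succ), mul_smul_comm, pow_succ, ← neg_smul]
    rw [mul_assoc]
    congr 1
    ring

lemma wedgeL_mul_comm {k l : ℕ} (v : Fin k → M) (w : Fin l → M) :
    wedgeL v * wedgeL w = ((-1 : ℝ) ^ (k * l)) • (wedgeL w * wedgeL v) := by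
  induction k with
  | zero => simp [wedgeL_zero_eq_one]
  | succ k ih =>
    have hv : wedgeL v = ι ℝ (v 0) * wedgeL (fun i : Fin k => v i.succ) := by
      rw [ι_mul_wedgeL]; congr 1; exact (Fin.cons_self_tail v).symm
    rw [hv, mul_assoc, ih (fun i => v i.succ), mul_smul_comm, ← mul_assoc,
      ι_mul_wedgeL_comm, smul_mul_assoc, smul_smul, mul_assoc, ← pow_add]
    congr 1
    ring

lemma wedgeL_zero_of_not_injective {k : ℕ} (v : Fin k → M) {m : ℕ} (c : Fin m → M)
    (hc : Function.Injective c) (w : Fin k → Fin m) (hw : ¬ Function.Injective w)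
    (hv : v = fun i => c (w i)) : wedgeL v = 0 := by
  rw [hv, wedgeL_eq_ιMulti]
  apply AlternatingMap.map_eq_zero_of_not_injective
  intro h
  exact hw (fun i j hij => h (show c (w i) = c (w j) from congrArg c hij))
section PartB

variable {m n : ℕ}

lemma orderEmbOfFin_congr {S S' : Finset (Fin m)} {k : ℕ} (h : S.card = k) (h' : S'.card = k)
    (e : S = S') (i : Fin k) : S.orderEmbOfFin h i = S'.orderEmbOfFin h' i := by subst e; rfl

lemma card_compl_eq (hm2 : n + n = m) {S : Finset (Fin m)} (hS : S.card = n) : Sᶜ.card = n := by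
  rw [Finset.card_compl, hS, Fintype.card_fin]; omega

def qfun (hm2 : n + n = m) (S : Finset (Fin m)) (hS : S.card = n) : Fin m → Fin m :=
  fun i => Fin.append (fun j => Sᶜ.orderEmbOfFin (card_compl_eq hm2 hS) j)
    (fun j => S.orderEmbOfFin hS j) (finCongr hm2.symm i)

lemma append_emb_injective (S T : Finset (Fin m)) (hS : S.card = n) {k : ℕ} (hT : T.card = k)
    (hdisj : Disjoint S T) :
    Function.Injective (Fin.append (fun j => S.orderEmbOfFin hS j)
      (fun j => T.orderEmbOfFin hT j)) := by
  intro i j hij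
  induction i using Fin.addCases with
  | left i' =>
    induction j using Fin.addCases with
    | left j' =>
      simp only [Fin.append_left] at hij
      exact congrArg _ ((S.orderEmbOfFin hS).injective hij)
    | right j' =>
      simp only [Fin.append_left, Fin.append_right] at hij
      have h1 := S.orderEmbOfFin_mem hS i'
      rw [hij] at h1
      exact absurd h1 (Finset.disjoint_right.mp hdisj (T.orderEmbOfFin_mem hT j'))
  | right i' =>
    induction j using Fin.addCases with
    | left j' =>
      simp only [Fin.append_left, Fin.append_right] at hij
      have h1 := T.orderEmbOfFin_mem hT i'
      rw [hij] at h1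
      exact absurd h1 (Finset.disjoint_left.mp hdisj (S.orderEmbOfFin_mem hS j'))
    | right j' =>
      simp only [Fin.append_right] at hij
      exact congrArg _ ((T.orderEmbOfFin hT).injective hij)

lemma qfun_bijective (hm2 : n + n = m) (S : Finset (Fin m)) (hS : S.card = n) :
    Function.Bijective (qfun hm2 S hS) := by
  refine Finite.injective_iff_bijective.mp ?_
  unfold qfun
  exact (append_emb_injective Sᶜ S (card_compl_eq hm2 hS) hS (disjoint_compl_left)).comp
    (finCongr hm2.symm).injective

def qperm (hm2 : n + n = m) (S : Finset (Fin m)) (hS : S.card = n) : Equiv.Perm (Fin m) :=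
  Equiv.ofBijective _ (qfun_bijective hm2 S hS)

def Kap (hm2 : n + n = m) (S : Finset (Fin m)) : ℝ :=
  if hS : S.card = n then ((Equiv.Perm.sign (qperm hm2 S hS) : ℤ) : ℝ) else 1

lemma Kap_def (hm2 : n + n = m) {S : Finset (Fin m)} (hS : S.card = n) :
    Kap hm2 S = ((Equiv.Perm.sign (qperm hm2 S hS) : ℤ) : ℝ) := dif_pos hS

lemma Kap_mul_self (hm2 : n + n = m) (S : Finset (Fin m)) : Kap hm2 S * Kap hm2 S = 1 := by
  unfold Kap
  split
  · rw [← Int.cast_mul, ← Units.val_mul, ← sq, Int.units_sq, Units.val_one, Int.cast_one]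
  · ring

def eps (s : ℕ) {m : ℕ} (a : Fin m) : ℝ := if (a : ℕ) < s then -1 else 1

def Eps (s : ℕ) {m : ℕ} (S : Finset (Fin m)) : ℝ := ∏ a ∈ S, eps s a

lemma eps_mul_self (s : ℕ) (a : Fin m) : eps s a * eps s a = 1 := by
  unfold eps; split <;> ring

lemma Eps_mul_self (s : ℕ) (S : Finset (Fin m)) : Eps s S * Eps s S = 1 := by
  rw [Eps, ← Finset.prod_mul_distrib]
  exact Finset.prod_eq_one fun a _ => eps_mul_self s a

lemma card_filter_lt (s : ℕ) (hs : s ≤ m) :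
    (Finset.univ.filter fun a : Fin m => (a : ℕ) < s).card = s := by
  have : (Finset.univ.filter fun a : Fin m => (a : ℕ) < s)
      = (Finset.univ : Finset (Fin s)).map (Fin.castLEEmb hs) := by
    ext a
    simp only [Finset.mem_filter, Finset.mem_univ, true_and, Finset.mem_map, Fin.castLEEmb,
      Fin.castLE]
    constructor
    · intro h; exact ⟨⟨a, h⟩, by simp⟩
    · rintro ⟨b, -, rfl⟩; simpa using b.isLt
  rw [this, Finset.card_map, Finset.card_univ, Fintype.card_fin]

lemma Eps_mul_compl (s : ℕ) (hs : s ≤ m) (S : Finset (Fin m)) :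
    Eps s S * Eps s Sᶜ = (-1 : ℝ) ^ s := by
  rw [Eps, Eps, Finset.prod_mul_prod_compl]
  unfold eps
  rw [Finset.prod_ite, Finset.prod_const, Finset.prod_const, one_pow, mul_one,
    card_filter_lt s hs]

-- reindexing by sorting
def sImg {k : ℕ} (v : Fin k → Fin m) : Finset (Fin m) := Finset.image v Finset.univ

lemma sImg_card {k : ℕ} {v : Fin k → Fin m} (hv : Function.Injective v) : (sImg v).card = k := by
  rw [sImg, Finset.card_image_of_injective _ hv, Finset.card_univ, Fintype.card_fin]

lemma mem_sImg {k : ℕ} (v : Fin k → Fin m) (i : Fin k) : v i ∈ sImg v :=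
  Finset.mem_image_of_mem v (Finset.mem_univ i)

def rfun {k : ℕ} (v : Fin k → Fin m) (hv : Function.Injective v) : Fin k → Fin k :=
  fun i => ((sImg v).orderIsoOfFin (sImg_card hv)).symm ⟨v i, mem_sImg v i⟩

lemma rfun_injective {k : ℕ} (v : Fin k → Fin m) (hv : Function.Injective v) :
    Function.Injective (rfun v hv) := by
  intro i j h
  have h2 := ((sImg v).orderIsoOfFin (sImg_card hv)).symm.injective h
  exact hv (Subtype.ext_iff.mp h2)

def rperm {k : ℕ} (v : Fin k → Fin m) (hv : Function.Injective v) : Equiv.Perm (Fin k) :=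
  Equiv.ofBijective (rfun v hv) (Finite.injective_iff_bijective.mp (rfun_injective v hv))

lemma emb_rfun {k : ℕ} (v : Fin k → Fin m) (hv : Function.Injective v) (i : Fin k) :
    (sImg v).orderEmbOfFin (sImg_card hv) (rfun v hv i) = v i := by
  rw [← Finset.coe_orderIsoOfFin_apply]
  simp [rfun]

end PartB
section PartC

variable {m n s : ℕ} {M : Type} [AddCommGroup M] [Module ℝ M] (b : Module.Basis (Fin m) ℝ M)

/-- The top-degree coordinate functional. -/
def Lfun : ExteriorAlgebra ℝ M →ₗ[ℝ] ℝ :=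
  ExteriorAlgebra.liftAlternating (Function.update (fun _ => 0) m b.det)

lemma Lfun_wedgeL (c : Fin m → M) : Lfun b (wedgeL c) = b.det c := by
  rw [wedgeL_eq_ιMulti, Lfun, ExteriorAlgebra.liftAlternating_apply_ιMulti,
    Function.update_self]

lemma wedge_reindex (c : Fin m → M) {k : ℕ} (v : Fin k → Fin m) (hv : Function.Injective v) :
    wedgeL (fun i => c (v i)) =
      ((Equiv.Perm.sign (rperm v hv) : ℤ) : ℝ) •
        wedgeL (fun i => c ((sImg v).orderEmbOfFin (sImg_card hv) i)) := by
  rw [wedgeL_eq_ιMulti, wedgeL_eq_ιMulti]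
  have h1 : (fun i => c (v i)) =
      (fun i => c ((sImg v).orderEmbOfFin (sImg_card hv) i)) ∘ (rperm v hv) := by
    funext i
    simp only [Function.comp_apply, rperm, Equiv.ofBijective_apply]
    rw [emb_rfun]
  rw [h1, AlternatingMap.map_perm, Units.smul_def, Int.cast_smul_eq_zsmul]

lemma wedge_append_basis {k l : ℕ} (f : Fin k → Fin m) (g : Fin l → Fin m) :
    Fin.append (fun i => b (f i)) (fun i => b (g i)) = fun i => b (Fin.append f g i) := by
  funext i
  induction i using Fin.addCases with
  | left i' => simp [Fin.append_left]
  | right i' => simp [Fin.append_right]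

variable (hm2 : n + n = m)

lemma wedge_qperm (S : Finset (Fin m)) (hS : S.card = n) :
    wedgeL (fun i => b (Sᶜ.orderEmbOfFin (card_compl_eq hm2 hS) i)) *
      wedgeL (fun i => b (S.orderEmbOfFin hS i))
    = Kap hm2 S • wedgeL (fun a => b a) := by
  rw [wedgeL_mul, wedge_append_basis]
  have e1 : (fun i => b (Fin.append (fun j => Sᶜ.orderEmbOfFin (card_compl_eq hm2 hS) j)
        (fun j => S.orderEmbOfFin hS j) i)) =
      fun i : Fin (n + n) => (fun a => b (qperm hm2 S hS a)) (finCongr hm2 i) := by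
    funext i
    simp [qperm, qfun]
  have e2 := wedgeL_cast (M := M) hm2 (fun a => b (qperm hm2 S hS a))
  rw [e1, e2]
  rw [wedgeL_eq_ιMulti, wedgeL_eq_ιMulti]
  have h1 : (fun a => b (qperm hm2 S hS a)) = ⇑b ∘ ⇑(qperm hm2 S hS) := rfl
  rw [h1, AlternatingMap.map_perm, Kap_def hm2 hS, Units.smul_def, Int.cast_smul_eq_zsmul]

lemma Lfun_mul_same (S : Finset (Fin m)) (hS : S.card = n) :
    Lfun b (wedgeL (fun i => b (Sᶜ.orderEmbOfFin (card_compl_eq hm2 hS) i)) *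
      wedgeL (fun i => b (S.orderEmbOfFin hS i))) = Kap hm2 S := by
  rw [wedge_qperm b hm2 S hS, map_smul, Lfun_wedgeL]
  have : b.det (fun a => b a) = 1 := b.det_self
  rw [this, smul_eq_mul, mul_one]

lemma wedge_mul_ne (S T : Finset (Fin m)) (hS : S.card = n) (hT : T.card = n) (hne : T ≠ S) :
    wedgeL (fun i => b (Tᶜ.orderEmbOfFin (card_compl_eq hm2 hT) i)) *
      wedgeL (fun i => b (S.orderEmbOfFin hS i)) = 0 := by
  rw [wedgeL_mul, wedge_append_basis]
  have hST : ∃ a, a ∈ S ∧ a ∉ T := by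
    by_contra hc
    push_neg at hc
    exact hne (Finset.eq_of_subset_of_card_le (fun a ha => hc a ha) (by omega)).symm
  obtain ⟨a, haS, haT⟩ := hST
  obtain ⟨j0, hj0⟩ : ∃ j0, S.orderEmbOfFin hS j0 = a := by
    have : a ∈ Set.range (S.orderEmbOfFin hS) := by
      rw [Finset.range_orderEmbOfFin]; exact haS
    exact this
  obtain ⟨i0, hi0⟩ : ∃ i0, Tᶜ.orderEmbOfFin (card_compl_eq hm2 hT) i0 = a := by
    have : a ∈ Set.range (Tᶜ.orderEmbOfFin (card_compl_eq hm2 hT)) := by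
      rw [Finset.range_orderEmbOfFin]; exact Finset.mem_compl.mpr haT
    exact this
  refine wedgeL_zero_of_not_injective _ b b.injective
    (Fin.append (fun j => Tᶜ.orderEmbOfFin (card_compl_eq hm2 hT) j)
      (fun j => S.orderEmbOfFin hS j)) ?_ rfl
  intro hinj
  have he : Fin.append (fun j => Tᶜ.orderEmbOfFin (card_compl_eq hm2 hT) j)
      (fun j => S.orderEmbOfFin hS j) (Fin.castAdd n i0) =
      Fin.append (fun j => Tᶜ.orderEmbOfFin (card_compl_eq hm2 hT) j)
      (fun j => S.orderEmbOfFin hS j) (Fin.natAdd n j0) := by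
    rw [Fin.append_left, Fin.append_right, hi0, hj0]
  have := hinj he
  have hval : (Fin.castAdd n i0 : ℕ) = (Fin.natAdd n j0 : ℕ) := by rw [this]
  simp only [Fin.coe_castAdd, Fin.coe_natAdd] at hval
  omega

end PartC
section PartD

variable {m n s : ℕ} {M : Type} [AddCommGroup M] [Module ℝ M] (b : Module.Basis (Fin m) ℝ M)
variable (hm2 : n + n = m)

/-- The projection onto basis wedges. -/
def Phi : ExteriorAlgebra ℝ M →ₗ[ℝ] ExteriorAlgebra ℝ M :=
  ∑ S : {S : Finset (Fin m) // S.card = n},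
    Kap hm2 S.1 • (((Lfun b) ∘ₗ LinearMap.mulLeft ℝ
        (wedgeL (fun i => b ((S.1)ᶜ.orderEmbOfFin (card_compl_eq hm2 S.2) i)))).smulRight
      (wedgeL (fun i => b (S.1.orderEmbOfFin S.2 i))))

lemma Phi_apply (x : ExteriorAlgebra ℝ M) :
    Phi b hm2 x = ∑ S : {S : Finset (Fin m) // S.card = n},
      (Kap hm2 S.1 * Lfun b
        (wedgeL (fun i => b ((S.1)ᶜ.orderEmbOfFin (card_compl_eq hm2 S.2) i)) * x)) •
        wedgeL (fun i => b (S.1.orderEmbOfFin S.2 i)) := by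
  rw [Phi, LinearMap.sum_apply]
  refine Finset.sum_congr rfl fun S _ => ?_
  simp only [LinearMap.smul_apply, LinearMap.smulRight_apply, LinearMap.coe_comp,
    Function.comp_apply, LinearMap.mulLeft_apply, smul_smul]

lemma Phi_id : ∀ x ∈ ⋀[ℝ]^n M, Phi b hm2 x = x := by
  have key : ∀ ψ : Fin n → M, Phi b hm2 (ιMulti ℝ n ψ) = ιMulti ℝ n ψ := by
    have hext : (Phi b hm2).compAlternatingMap (ιMulti ℝ n (M := M)) = ιMulti ℝ n (M := M) := by
      refine Module.Basis.ext_alternating b fun v hv => ?_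
      simp only [LinearMap.compAlternatingMap_apply]
      rw [← wedgeL_eq_ιMulti, wedge_reindex b v hv, map_smul, Phi_apply]
      set sg : ℝ := ((Equiv.Perm.sign (rperm v hv) : ℤ) : ℝ) with hsg
      rw [Finset.smul_sum]
      rw [Fintype.sum_eq_single (⟨sImg v, sImg_card hv⟩ : {S : Finset (Fin m) // S.card = n})]
      · rw [Lfun_mul_same b hm2 (sImg v) (sImg_card hv), smul_smul]
        have hk := Kap_mul_self hm2 (sImg v)
        have hcoe : ((⟨sImg v, sImg_card hv⟩ : {S : Finset (Fin m) // S.card = n}) : Finset (Fin m))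
            = sImg v := rfl
        simp only [hcoe]
        rw [hk, mul_one]
      · intro T hT
        rw [wedge_mul_ne b hm2 (sImg v) T.1 (sImg_card hv) T.2
          (fun h => hT (Subtype.ext h)), map_zero, mul_zero, zero_smul, smul_zero]
    intro ψ
    have := DFunLike.congr_fun hext ψ
    simpa using this
  intro x hx
  rw [← ExteriorAlgebra.ιMulti_span_fixedDegree] at hx
  induction hx using Submodule.span_induction with
  | mem x h =>
    obtain ⟨ψ, rfl⟩ := h
    exact key ψ
  | zero => simp
  | add u v _ _ h1 h2 => rw [map_add, h1, h2]
  | smul r u _ h => rw [map_smul, h]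

lemma Kap_compl (S : Finset (Fin m)) (hS : S.card = n) :
    Kap hm2 Sᶜ = (-1 : ℝ) ^ (n * n) * Kap hm2 S := by
  -- use the model M₀ = Fin m → ℝ
  let b₀ : Module.Basis (Fin m) ℝ (Fin m → ℝ) := Pi.basisFun ℝ (Fin m)
  have h1 := Lfun_mul_same b₀ hm2 Sᶜ (card_compl_eq hm2 hS)
  have h2 := Lfun_mul_same b₀ hm2 S hS
  have e : ∀ i, Sᶜᶜ.orderEmbOfFin (card_compl_eq hm2 (card_compl_eq hm2 hS)) i
      = S.orderEmbOfFin hS i :=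
    orderEmbOfFin_congr _ _ (compl_compl S)
  rw [← h1, ← h2]
  have e2 : (fun i => b₀ (Sᶜᶜ.orderEmbOfFin (card_compl_eq hm2 (card_compl_eq hm2 hS)) i))
      = fun i => b₀ (S.orderEmbOfFin hS i) := by
    funext i; rw [e i]
  rw [e2]
  rw [wedgeL_mul_comm]
  rw [map_smul, smul_eq_mul]

lemma Eps_Kap_rel (hs : s ≤ m) (S : Finset (Fin m)) (hS : S.card = n) :
    Eps s S * Kap hm2 Sᶜ =
      ((-1 : ℝ) ^ s * (-1 : ℝ) ^ (n * n)) * (Eps s Sᶜ * Kap hm2 S) := by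
  have h1 := Eps_mul_compl s hs S
  have h2 := Kap_compl hm2 S hS
  have h3 := Eps_mul_self s Sᶜ
  have h4 := Kap_mul_self hm2 S
  have hE : Eps s S = (-1 : ℝ) ^ s * Eps s Sᶜ := by
    calc Eps s S = Eps s S * (Eps s Sᶜ * Eps s Sᶜ) := by rw [h3, mul_one]
      _ = (Eps s S * Eps s Sᶜ) * Eps s Sᶜ := by ring
      _ = (-1 : ℝ) ^ s * Eps s Sᶜ := by rw [h1]
  rw [hE, h2]
  ring

/-- Main star formula. -/
lemma star_wedge (g : M →ₗ[ℝ] M →ₗ[ℝ] ℝ)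
    (hgb : ∀ a c : Fin m, g (b a) (b c) = if a = c then eps s a else 0)
    (G : ExteriorAlgebra ℝ M →ₗ[ℝ] ExteriorAlgebra ℝ M →ₗ[ℝ] ℝ)
    (hG : ∀ (p : ℕ) (φ ψ : Fin p → M),
      G (wedgeL φ) (wedgeL ψ) = Matrix.det (Matrix.of fun i j => g (φ i) (ψ j)))
    (st : Module.End ℝ (ExteriorAlgebra ℝ M))
    (hmem : ∀ x ∈ ⋀[ℝ]^n M, st x ∈ ⋀[ℝ]^n M)
    (hst : ∀ a c, a ∈ ⋀[ℝ]^n M → c ∈ ⋀[ℝ]^n M →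
      a * st c = G a c • wedgeL (fun a => b a))
    (S : Finset (Fin m)) (hS : S.card = n) :
    st (wedgeL (fun i => b (S.orderEmbOfFin hS i))) =
      (Eps s S * Kap hm2 Sᶜ) • wedgeL (fun i => b (Sᶜ.orderEmbOfFin (card_compl_eq hm2 hS) i)) := by
  have hx : st (wedgeL (fun i => b (S.orderEmbOfFin hS i))) ∈ ⋀[ℝ]^n M :=
    hmem _ (wedgeL_mem _)
  rw [← Phi_id b hm2 _ hx, Phi_apply]
  have hcoeff : ∀ T : {S : Finset (Fin m) // S.card = n},
      Lfun b (wedgeL (fun i => b ((T.1)ᶜ.orderEmbOfFin (card_compl_eq hm2 T.2) i)) *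
        st (wedgeL (fun i => b (S.orderEmbOfFin hS i))))
      = (if T.1 = Sᶜ then Eps s S else 0) := by
    intro T
    rw [hst _ _ (wedgeL_mem _) (wedgeL_mem _), map_smul, Lfun_wedgeL]
    have hdet : b.det (fun a => b a) = 1 := b.det_self
    rw [hdet, smul_eq_mul, mul_one, hG]
    by_cases hTS : T.1 = Sᶜ
    · rw [if_pos hTS]
      have hTc : (T.1)ᶜ = S := by rw [hTS, compl_compl]
      have e : ∀ i, (T.1)ᶜ.orderEmbOfFin (card_compl_eq hm2 T.2) i = S.orderEmbOfFin hS i :=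
        orderEmbOfFin_congr _ _ hTc
      have hmat : (Matrix.of fun i j => g (b ((T.1)ᶜ.orderEmbOfFin (card_compl_eq hm2 T.2) i))
          (b (S.orderEmbOfFin hS j))) = Matrix.diagonal (fun i => eps s (S.orderEmbOfFin hS i)) := by
        ext i j
        rw [Matrix.of_apply, e i, hgb]
        by_cases hij : i = j
        · subst hij; simp [Matrix.diagonal]
        · have : S.orderEmbOfFin hS i ≠ S.orderEmbOfFin hS j :=
            fun h => hij ((S.orderEmbOfFin hS).injective h)
          rw [if_neg this, Matrix.diagonal_apply_ne _ hij]
      rw [hmat, Matrix.det_diagonal]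
      -- ∏ i, eps s (emb i) = Eps s S
      rw [Eps]
      exact Finset.prod_nbij (fun i => S.orderEmbOfFin hS i)
        (fun i _ => S.orderEmbOfFin_mem hS i)
        (fun i _ j _ h => (S.orderEmbOfFin hS).injective h)
        (fun a ha => by
          have : a ∈ Set.range (S.orderEmbOfFin hS) := by
            rw [Finset.range_orderEmbOfFin]; exact Finset.mem_coe.mpr ha
          obtain ⟨i, hi⟩ := this
          exact ⟨i, Finset.mem_coe.mpr (Finset.mem_univ i), hi⟩)
        (fun i _ => rfl)
    · rw [if_neg hTS]
      have hne : (T.1)ᶜ ≠ S := fun h => hTS (by rw [← h, compl_compl])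
      -- row of zeros : ∃ a ∈ Tᶜ \ S
      have hTcc : ((T.1)ᶜ).card = n := card_compl_eq hm2 T.2
      have hST : ∃ a, a ∈ (T.1)ᶜ ∧ a ∉ S := by
        by_contra hc
        push_neg at hc
        exact hne (Finset.eq_of_subset_of_card_le (fun a ha => hc a ha) (by omega))
      obtain ⟨a, haT, haS⟩ := hST
      obtain ⟨i0, hi0⟩ : ∃ i0, (T.1)ᶜ.orderEmbOfFin (card_compl_eq hm2 T.2) i0 = a := by
        have : a ∈ Set.range ((T.1)ᶜ.orderEmbOfFin (card_compl_eq hm2 T.2)) := by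
          rw [Finset.range_orderEmbOfFin]; exact haT
        exact this
      refine Matrix.det_eq_zero_of_row_eq_zero i0 fun j => ?_
      rw [Matrix.of_apply, hgb]
      have : (T.1)ᶜ.orderEmbOfFin (card_compl_eq hm2 T.2) i0 ≠ S.orderEmbOfFin hS j := by
        rw [hi0]
        intro h
        exact haS (h ▸ S.orderEmbOfFin_mem hS j)
      rw [if_neg this]
  rw [Fintype.sum_eq_single (⟨Sᶜ, card_compl_eq hm2 hS⟩ : {S : Finset (Fin m) // S.card = n})]
  · rw [hcoeff, if_pos rfl, mul_comm]
  · intro T hT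
    rw [hcoeff, if_neg (fun h => hT (Subtype.ext h)), mul_zero, zero_smul]

end PartD
section PartE

variable {m n : ℕ}

lemma solder_pow {U : Type} [AddCommGroup U] [Module ℝ U] (u : Fin m → U) (k : ℕ) :
    (solder u) ^ k = ∑ v : Fin k → Fin m,
      wedgeL (fun i => u (v i)) ⊗ₜ[ℝ]
        wedgeL (fun i => (Pi.single (v i) 1 : Fin m → ℝ)) := by
  induction k with
  | zero =>
    rw [pow_zero]
    rw [Fintype.sum_unique]
    rw [wedgeL_zero_eq_one, wedgeL_zero_eq_one, Algebra.TensorProduct.one_def]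
  | succ k ih =>
    rw [pow_succ', ih, solder, Finset.sum_mul_sum]
    rw [← Equiv.sum_comp (Fin.consEquiv (fun _ : Fin (k + 1) => Fin m))
      (fun v : Fin (k + 1) → Fin m => wedgeL (fun i => u (v i)) ⊗ₜ[ℝ]
        wedgeL (fun i => (Pi.single (v i) 1 : Fin m → ℝ)))]
    rw [Fintype.sum_prod_type]
    refine Finset.sum_congr rfl fun a _ => Finset.sum_congr rfl fun v _ => ?_
    rw [Algebra.TensorProduct.tmul_mul_tmul, ι_mul_wedgeL, ι_mul_wedgeL]
    congr 1
    · congr 1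
      funext i
      refine Fin.cases ?_ (fun j => ?_) i <;> simp [Fin.consEquiv]
    · congr 1
      funext i
      refine Fin.cases ?_ (fun j => ?_) i <;> simp [Fin.consEquiv]

def tauf (hm2 : n + n = m) (v : Fin n → Fin m) : Fin n → Fin m :=
  if hv : Function.Injective v then
    fun i => (sImg v)ᶜ.orderEmbOfFin (card_compl_eq hm2 (sImg_card hv)) (rfun v hv i)
  else v

lemma tauf_of_injective (hm2 : n + n = m) {v : Fin n → Fin m} (hv : Function.Injective v) :
    tauf hm2 v =
      fun i => (sImg v)ᶜ.orderEmbOfFin (card_compl_eq hm2 (sImg_card hv)) (rfun v hv i) :=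
  dif_pos hv

lemma tauf_of_not_injective (hm2 : n + n = m) {v : Fin n → Fin m} (hv : ¬ Function.Injective v) :
    tauf hm2 v = v := dif_neg hv

lemma tauf_injective (hm2 : n + n = m) {v : Fin n → Fin m} (hv : Function.Injective v) :
    Function.Injective (tauf hm2 v) := by
  rw [tauf_of_injective hm2 hv]
  exact fun i j h => rfun_injective v hv
    (((sImg v)ᶜ.orderEmbOfFin (card_compl_eq hm2 (sImg_card hv))).injective h)

lemma sImg_tauf (hm2 : n + n = m) {v : Fin n → Fin m} (hv : Function.Injective v) :
    sImg (tauf hm2 v) = (sImg v)ᶜ := by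
  ext a
  rw [sImg, Finset.mem_image]
  constructor
  · rintro ⟨i, -, rfl⟩
    rw [tauf_of_injective hm2 hv]
    exact (sImg v)ᶜ.orderEmbOfFin_mem _ _
  · intro ha
    obtain ⟨j, hj⟩ : ∃ j, (sImg v)ᶜ.orderEmbOfFin (card_compl_eq hm2 (sImg_card hv)) j = a := by
      have : a ∈ Set.range ((sImg v)ᶜ.orderEmbOfFin (card_compl_eq hm2 (sImg_card hv))) := by
        rw [Finset.range_orderEmbOfFin]; exact ha
      exact this
    obtain ⟨i, hi⟩ := (rperm v hv).surjective j
    refine ⟨i, Finset.mem_univ i, ?_⟩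
    have h2 : tauf hm2 v i
        = ((sImg v)ᶜ.orderEmbOfFin (card_compl_eq hm2 (sImg_card hv))) (rfun v hv i) := by
      rw [tauf_of_injective hm2 hv]
    have h3 : rfun v hv i = j := hi
    rw [h2, h3, hj]

lemma rfun_tauf (hm2 : n + n = m) {v : Fin n → Fin m} (hv : Function.Injective v) (i : Fin n) :
    rfun (tauf hm2 v) (tauf_injective hm2 hv) i = rfun v hv i := by
  have h1 : sImg (tauf hm2 v) = (sImg v)ᶜ := sImg_tauf hm2 hv
  apply ((sImg (tauf hm2 v)).orderEmbOfFin (sImg_card (tauf_injective hm2 hv))).injective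
  rw [emb_rfun]
  have h2 : tauf hm2 v i
      = ((sImg v)ᶜ.orderEmbOfFin (card_compl_eq hm2 (sImg_card hv))) (rfun v hv i) := by
    rw [tauf_of_injective hm2 hv]
  rw [h2]
  exact orderEmbOfFin_congr _ _ h1.symm _

lemma tauf_tauf (hm2 : n + n = m) (v : Fin n → Fin m) : tauf hm2 (tauf hm2 v) = v := by
  by_cases hv : Function.Injective v
  · funext i
    have h1 : (sImg (tauf hm2 v))ᶜ = sImg v := by rw [sImg_tauf hm2 hv, compl_compl]
    have h2 : tauf hm2 (tauf hm2 v) i =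
        ((sImg (tauf hm2 v))ᶜ.orderEmbOfFin
            (card_compl_eq hm2 (sImg_card (tauf_injective hm2 hv))))
          (rfun (tauf hm2 v) (tauf_injective hm2 hv) i) := by
      rw [tauf_of_injective hm2 (tauf_injective hm2 hv)]
    rw [h2, rfun_tauf hm2 hv,
      orderEmbOfFin_congr (card_compl_eq hm2 (sImg_card (tauf_injective hm2 hv)))
        (sImg_card hv) h1 (rfun v hv i)]
    exact emb_rfun v hv i
  · rw [tauf_of_not_injective hm2 hv, tauf_of_not_injective hm2 hv]

lemma tauf_involutive (hm2 : n + n = m) : Function.Involutive (tauf hm2) := tauf_tauf hm2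

end PartE

/-- If `m = 2n`, the power `θ^n` is self-dual for the composite Hodge operator
`⋆̄ = ∗_g ∘ ★_h`, and `∗_g(θ^n) = (−1)^s (−1)^{n²} ★_h(θ^n)`. -/
theorem stmt_8 (m r s n : ℕ) (hm : r + s = m) (hmn : m = 2 * n)
    (U : Type) [AddCommGroup U] [Module ℝ U]
    (η : (Fin m → ℝ) →ₗ[ℝ] (Fin m → ℝ) →ₗ[ℝ] ℝ)
    (hη : ∀ v w, η v w = ∑ a : Fin _, (if (a : ℕ) < s then (-1 : ℝ) else 1) * v a * w a)
    (g : U →ₗ[ℝ] U →ₗ[ℝ] ℝ) (u : Module.Basis (Fin m) ℝ U)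
    (hg : ∀ a b, g (u a) (u b) = if a = b then (if (a : ℕ) < s then (-1 : ℝ) else 1) else 0)
    (G : ExteriorAlgebra ℝ U →ₗ[ℝ] ExteriorAlgebra ℝ U →ₗ[ℝ] ℝ)
    (hG : ∀ (p : ℕ) (φ ψ : Fin p → U),
      G (wedgeL φ) (wedgeL ψ) = Matrix.det (Matrix.of fun i j => g (φ i) (ψ j)))
    (H : ExteriorAlgebra ℝ (Fin m → ℝ) →ₗ[ℝ] ExteriorAlgebra ℝ (Fin m → ℝ) →ₗ[ℝ] ℝ)
    (hH : ∀ (p : ℕ) (v w : Fin p → (Fin m → ℝ)),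
      H (wedgeL v) (wedgeL w) = Matrix.det (Matrix.of fun i j => η (v i) (w j)))
    (starU : Module.End ℝ (ExteriorAlgebra ℝ U))
    (hstarU_mem : ∀ x ∈ ⋀[ℝ]^n U, starU x ∈ ⋀[ℝ]^n U)
    (hstarU : ∀ a b, a ∈ ⋀[ℝ]^n U → b ∈ ⋀[ℝ]^n U →
      a * starU b = G a b • wedgeL (fun a => u a))
    (starW : Module.End ℝ (ExteriorAlgebra ℝ (Fin m → ℝ)))
    (hstarW_mem : ∀ x ∈ ⋀[ℝ]^n (Fin m → ℝ), starW x ∈ ⋀[ℝ]^n (Fin m → ℝ))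
    (hstarW : ∀ a b, a ∈ ⋀[ℝ]^n (Fin m → ℝ) → b ∈ ⋀[ℝ]^n (Fin m → ℝ) →
      a * starW b = H a b • wedgeL (fun a : Fin m => Pi.single a (1 : ℝ))) :
    TensorProduct.map starU LinearMap.id
        (TensorProduct.map LinearMap.id starW ((solder (fun a => u a)) ^ n)) =
      (solder (fun a => u a)) ^ n ∧
    TensorProduct.map starU LinearMap.id ((solder (fun a => u a)) ^ n) =
      ((-1 : ℝ) ^ s * (-1 : ℝ) ^ (n * n)) •
        TensorProduct.map LinearMap.id starW ((solder (fun a => u a)) ^ n) := by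
  have hm2 : n + n = m := by omega
  have hs : s ≤ m := by omega
  set bW : Module.Basis (Fin m) ℝ (Fin m → ℝ) := Pi.basisFun ℝ (Fin m) with hbWdef
  have hbWa : ∀ a : Fin m, bW a = Pi.single a 1 := fun a => Pi.basisFun_apply ℝ (Fin m) a
  have hgb : ∀ a c : Fin m, g (u a) (u c) = if a = c then eps s a else 0 := by
    intro a c; rw [hg]; rfl
  have hηb : ∀ a c : Fin m, η (bW a) (bW c) = if a = c then eps s a else 0 := by
    intro a c
    rw [hbWa, hbWa, hη]
    rw [Finset.sum_eq_single a]
    · by_cases hac : a = c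
      · subst hac; simp [Pi.single_apply, eps]
      · simp [Pi.single_apply, hac, Ne.symm hac]
    · intro x _ hx
      simp [Pi.single_apply, hx]
    · simp
  have hSU := star_wedge u hm2 g hgb G hG starU hstarU_mem hstarU
  have hstarW' : ∀ a c, a ∈ ⋀[ℝ]^n (Fin m → ℝ) → c ∈ ⋀[ℝ]^n (Fin m → ℝ) →
      a * starW c = H a c • wedgeL (fun a => bW a) := by
    intro a c ha hc
    rw [hstarW a c ha hc]
    congr 2
    funext x
    rw [hbWa]
  have hSW := star_wedge bW hm2 η hηb H hH starW hstarW_mem hstarW'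
  -- rewrite W-wedges through bW
  have hPWb : ∀ {k : ℕ} (w : Fin k → Fin m),
      wedgeL (fun i => (Pi.single (w i) 1 : Fin m → ℝ)) = wedgeL (fun i => bW (w i)) := by
    intro k w; congr 1; funext i; rw [hbWa]
  -- the reindexing sum identity
  have hre : ∀ (F : (Fin n → Fin m) → Omega U m),
      ∑ v : Fin n → Fin m, F (tauf hm2 v) = ∑ v : Fin n → Fin m, F v := by
    intro F
    have := Equiv.sum_comp (Function.Involutive.toPerm _ (tauf_involutive hm2)) F
    simpa [Function.Involutive.coe_toPerm] using this
  -- vanishing for non-injective tuples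
  have hPW0 : ∀ v : Fin n → Fin m, ¬ Function.Injective v →
      wedgeL (fun i => (Pi.single (v i) 1 : Fin m → ℝ)) = 0 := by
    intro v hv
    exact wedgeL_zero_of_not_injective _ bW bW.injective v hv
      (funext fun i => (hbWa (v i)).symm)
  -- abbreviations for the injective case
  have key1 : ∀ v : Fin n → Fin m,
      TensorProduct.map starU LinearMap.id (TensorProduct.map LinearMap.id starW
        (wedgeL (fun i => u (v i)) ⊗ₜ[ℝ]
          wedgeL (fun i => (Pi.single (v i) 1 : Fin m → ℝ))))
      = wedgeL (fun i => u (tauf hm2 v i)) ⊗ₜ[ℝ]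
          wedgeL (fun i => (Pi.single (tauf hm2 v i) 1 : Fin m → ℝ)) := by
    intro v
    by_cases hv : Function.Injective v
    · set S := sImg v with hSdef
      set hS := sImg_card hv
      set sg : ℝ := ((Equiv.Perm.sign (rperm v hv) : ℤ) : ℝ) with hsgdef
      have hU : wedgeL (fun i => u (v i)) = sg • wedgeL (fun i => u (S.orderEmbOfFin hS i)) :=
        wedge_reindex u v hv
      have hW : wedgeL (fun i => (Pi.single (v i) 1 : Fin m → ℝ))
          = sg • wedgeL (fun i => bW (S.orderEmbOfFin hS i)) := by
        rw [hPWb v]; exact wedge_reindex bW v hv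
      -- tau v data
      have htv : Function.Injective (tauf hm2 v) := tauf_injective hm2 hv
      have hemb : ∀ i, (sImg (tauf hm2 v)).orderEmbOfFin (sImg_card htv) i
          = Sᶜ.orderEmbOfFin (card_compl_eq hm2 hS) i :=
        orderEmbOfFin_congr _ _ (sImg_tauf hm2 hv)
      have hperm : rperm (tauf hm2 v) htv = rperm v hv := Equiv.ext (rfun_tauf hm2 hv)
      have hsg2 : ((Equiv.Perm.sign (rperm (tauf hm2 v) htv) : ℤ) : ℝ) = sg := by
        rw [hperm]
      have hUt : wedgeL (fun i => u (tauf hm2 v i))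
          = sg • wedgeL (fun i => u (Sᶜ.orderEmbOfFin (card_compl_eq hm2 hS) i)) := by
        rw [wedge_reindex u (tauf hm2 v) htv, hsg2]
        have he : (fun i => u ((sImg (tauf hm2 v)).orderEmbOfFin (sImg_card htv) i))
            = fun i => u (Sᶜ.orderEmbOfFin (card_compl_eq hm2 hS) i) :=
          funext fun i => congrArg u (hemb i)
        rw [he]
      have hWt : wedgeL (fun i => (Pi.single (tauf hm2 v i) 1 : Fin m → ℝ))
          = sg • wedgeL (fun i => bW (Sᶜ.orderEmbOfFin (card_compl_eq hm2 hS) i)) := by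
        rw [hPWb (tauf hm2 v), wedge_reindex bW (tauf hm2 v) htv, hsg2]
        have he : (fun i => bW ((sImg (tauf hm2 v)).orderEmbOfFin (sImg_card htv) i))
            = fun i => bW (Sᶜ.orderEmbOfFin (card_compl_eq hm2 hS) i) :=
          funext fun i => congrArg bW (hemb i)
        rw [he]
      rw [hU, hW, hUt, hWt]
      rw [TensorProduct.smul_tmul_smul, map_smul, map_smul, TensorProduct.map_tmul,
        TensorProduct.map_tmul, LinearMap.id_coe, id_eq, LinearMap.id_coe, id_eq]
      rw [hSU S hS, hSW S hS, TensorProduct.smul_tmul_smul, smul_smul,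
        TensorProduct.smul_tmul_smul]
      congr 1
      have hE := Eps_mul_self s S
      have hK := Kap_mul_self hm2 Sᶜ
      calc sg * sg * (Eps s S * Kap hm2 Sᶜ * (Eps s S * Kap hm2 Sᶜ))
          = (sg * sg) * ((Eps s S * Eps s S) * (Kap hm2 Sᶜ * Kap hm2 Sᶜ)) := by ring
        _ = sg * sg := by rw [hE, hK]; ring
    · rw [tauf_of_not_injective hm2 hv, hPW0 v hv, TensorProduct.tmul_zero, map_zero, map_zero]
  have key2 : ∀ v : Fin n → Fin m,
      TensorProduct.map starU LinearMap.id
        (wedgeL (fun i => u (v i)) ⊗ₜ[ℝ]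
          wedgeL (fun i => (Pi.single (v i) 1 : Fin m → ℝ)))
      = ((-1 : ℝ) ^ s * (-1 : ℝ) ^ (n * n)) •
        TensorProduct.map LinearMap.id starW
          (wedgeL (fun i => u (tauf hm2 v i)) ⊗ₜ[ℝ]
            wedgeL (fun i => (Pi.single (tauf hm2 v i) 1 : Fin m → ℝ))) := by
    intro v
    by_cases hv : Function.Injective v
    · set S := sImg v with hSdef
      set hS := sImg_card hv
      set sg : ℝ := ((Equiv.Perm.sign (rperm v hv) : ℤ) : ℝ) with hsgdef
      have hU : wedgeL (fun i => u (v i)) = sg • wedgeL (fun i => u (S.orderEmbOfFin hS i)) :=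
        wedge_reindex u v hv
      have hW : wedgeL (fun i => (Pi.single (v i) 1 : Fin m → ℝ))
          = sg • wedgeL (fun i => bW (S.orderEmbOfFin hS i)) := by
        rw [hPWb v]; exact wedge_reindex bW v hv
      have htv : Function.Injective (tauf hm2 v) := tauf_injective hm2 hv
      have hemb : ∀ i, (sImg (tauf hm2 v)).orderEmbOfFin (sImg_card htv) i
          = Sᶜ.orderEmbOfFin (card_compl_eq hm2 hS) i :=
        orderEmbOfFin_congr _ _ (sImg_tauf hm2 hv)
      have hperm : rperm (tauf hm2 v) htv = rperm v hv := Equiv.ext (rfun_tauf hm2 hv)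
      have hsg2 : ((Equiv.Perm.sign (rperm (tauf hm2 v) htv) : ℤ) : ℝ) = sg := by
        rw [hperm]
      have hUt : wedgeL (fun i => u (tauf hm2 v i))
          = sg • wedgeL (fun i => u (Sᶜ.orderEmbOfFin (card_compl_eq hm2 hS) i)) := by
        rw [wedge_reindex u (tauf hm2 v) htv, hsg2]
        have he : (fun i => u ((sImg (tauf hm2 v)).orderEmbOfFin (sImg_card htv) i))
            = fun i => u (Sᶜ.orderEmbOfFin (card_compl_eq hm2 hS) i) :=
          funext fun i => congrArg u (hemb i)
        rw [he]
      have hWt : wedgeL (fun i => (Pi.single (tauf hm2 v i) 1 : Fin m → ℝ))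
          = sg • wedgeL (fun i => bW (Sᶜ.orderEmbOfFin (card_compl_eq hm2 hS) i)) := by
        rw [hPWb (tauf hm2 v), wedge_reindex bW (tauf hm2 v) htv, hsg2]
        have he : (fun i => bW ((sImg (tauf hm2 v)).orderEmbOfFin (sImg_card htv) i))
            = fun i => bW (Sᶜ.orderEmbOfFin (card_compl_eq hm2 hS) i) :=
          funext fun i => congrArg bW (hemb i)
        rw [he]
      -- star of the complement wedge
      have hSWc : starW (wedgeL (fun i => bW (Sᶜ.orderEmbOfFin (card_compl_eq hm2 hS) i)))
          = (Eps s Sᶜ * Kap hm2 S) • wedgeL (fun i => bW (S.orderEmbOfFin hS i)) := by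
        rw [hSW Sᶜ (card_compl_eq hm2 hS)]
        have h1 : Kap hm2 Sᶜᶜ = Kap hm2 S := by rw [compl_compl]
        have h2 : ∀ i, Sᶜᶜ.orderEmbOfFin (card_compl_eq hm2 (card_compl_eq hm2 hS)) i
            = S.orderEmbOfFin hS i := orderEmbOfFin_congr _ _ (compl_compl S)
        rw [h1]
        have he : (fun i => bW (Sᶜᶜ.orderEmbOfFin (card_compl_eq hm2 (card_compl_eq hm2 hS)) i))
            = fun i => bW (S.orderEmbOfFin hS i) :=
          funext fun i => congrArg bW (h2 i)
        rw [he]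
      rw [hU, hW, hUt, hWt]
      rw [TensorProduct.smul_tmul_smul, TensorProduct.smul_tmul_smul, map_smul, map_smul,
        TensorProduct.map_tmul, TensorProduct.map_tmul, LinearMap.id_coe, id_eq,
        LinearMap.id_coe, id_eq]
      rw [hSU S hS, hSWc]
      rw [TensorProduct.smul_tmul', TensorProduct.tmul_smul]
      rw [smul_smul, smul_smul, smul_smul]
      have hrel := Eps_Kap_rel hm2 hs S hS
      have hsc : sg * sg * (Eps s S * Kap hm2 Sᶜ)
          = (-1 : ℝ) ^ s * (-1 : ℝ) ^ (n * n) * (sg * sg) * (Eps s Sᶜ * Kap hm2 S) := by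
        linear_combination (sg * sg) * hrel
      rw [hsc]
      exact TensorProduct.smul_tmul' _ _ _
    · rw [tauf_of_not_injective hm2 hv, hPW0 v hv, TensorProduct.tmul_zero, map_zero, map_zero,
        smul_zero]
  constructor
  · rw [solder_pow (fun a => u a) n, map_sum, map_sum]
    rw [Finset.sum_congr rfl (fun v _ => key1 v)]
    exact hre fun v => wedgeL (fun i => u (v i)) ⊗ₜ[ℝ]
      wedgeL (fun i => (Pi.single (v i) 1 : Fin m → ℝ))
  · rw [solder_pow (fun a => u a) n, map_sum, map_sum, Finset.smul_sum]
    rw [Finset.sum_congr rfl (fun v _ => key2 v)]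
    rw [← Finset.smul_sum, ← Finset.smul_sum]
    congr 1
    exact hre fun v => TensorProduct.map LinearMap.id starW
      (wedgeL (fun i => u (v i)) ⊗ₜ[ℝ]
        wedgeL (fun i => (Pi.single (v i) 1 : Fin m → ℝ)))
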